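/- Let J, R, Q be real n×n matrices with Jᵀ = −J, R positive semidefinite, and Q positive semidefinite, and let M denote the matrix (J − R)Q viewed as a complex n×n matrix. Then every nonzero purely imaginary eigenvalue of M is semisimple: for every λ ∈ ℂ with λ ≠ 0 and Re(λ) = 0, the generalized eigenspace ker((M − λI)ⁿ) equals the eigenspace ker(M − λI). -/

import Mathlib

open Matrix ComplexOrder

/-- The complexification of a real matrix. -/
noncomputable def toC {n : ℕ} (A : Matrix (Fin n) (Fin n) ℝ) : Matrix (Fin n) (Fin n) ℂ :=
  A.map (fun a => (a : ℂ))

lemma toC_mul {n : ℕ} (A B : Matrix (Fin n) (Fin n) ℝ) :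
    toC (A * B) = toC A * toC B :=
  Matrix.map_mul (f := Complex.ofRealHom)

lemma toC_sub {n : ℕ} (A B : Matrix (Fin n) (Fin n) ℝ) :
    toC (A - B) = toC A - toC B := by
  ext i j; simp [toC]

lemma toC_conjTranspose {n : ℕ} (A : Matrix (Fin n) (Fin n) ℝ) :
    (toC A)ᴴ = toC Aᵀ := by
  ext i j
  simp [toC, conjTranspose_apply, Complex.conj_ofReal]

lemma toC_posSemidef {n : ℕ} {A : Matrix (Fin n) (Fin n) ℝ} (hA : A.PosSemidef) :
    (toC A).PosSemidef := by
  obtain ⟨B, hB⟩ := by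
    open scoped MatrixOrder in
    exact CStarAlgebra.nonneg_iff_eq_star_mul_self.mp hA.nonneg
  rw [hB, star_eq_conjTranspose, toC_mul]
  have h : toC Bᴴ = (toC B)ᴴ := by
    rw [toC_conjTranspose]; rfl
  rw [h]
  exact Matrix.posSemidef_conjTranspose_mul_self (toC B)

lemma conj_quad {n : ℕ} (A : Matrix (Fin n) (Fin n) ℂ) (v : Fin n → ℂ) :
    (starRingEnd ℂ) (star v ⬝ᵥ A *ᵥ v) = star v ⬝ᵥ Aᴴ *ᵥ v := by
  rw [star_dotProduct v (A *ᵥ v), starRingEnd_apply, star_star, star_mulVec, dotProduct_mulVec]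

lemma star_vecMul' {n : ℕ} (A : Matrix (Fin n) (Fin n) ℂ) (z : Fin n → ℂ) :
    star z ᵥ* A = star (Aᴴ *ᵥ z) := by
  rw [star_mulVec, conjTranspose_conjTranspose]

/-- The key step: for `N = (J - R) * Q - μ • 1` with `J` skew-Hermitian, `R, Q` PSD,
`μ` nonzero purely imaginary, `N² x = 0` implies `N x = 0`. -/
lemma key_step {n : ℕ} (Jc Rc Qc : Matrix (Fin n) (Fin n) ℂ)
    (hJ : Jcᴴ = -Jc) (hR : Rc.PosSemidef) (hQ : Qc.PosSemidef)
    (μ : ℂ) (hμ0 : μ ≠ 0) (hμ : μ.re = 0) (x : Fin n → ℂ)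
    (h2 : ((Jc - Rc) * Qc - μ • 1) *ᵥ (((Jc - Rc) * Qc - μ • 1) *ᵥ x) = 0) :
    ((Jc - Rc) * Qc - μ • 1) *ᵥ x = 0 := by
  have hμconj : (starRingEnd ℂ) μ = -μ := by
    apply Complex.ext <;> simp [hμ]
  set y := ((Jc - Rc) * Qc - μ • 1) *ᵥ x with hy_def
  clear_value y
  -- From h2 : ((J-R)Q) y = μ • y
  rw [sub_mulVec, Matrix.smul_mulVec, one_mulVec, sub_eq_zero] at h2
  obtain ⟨z, hz_def⟩ : ∃ z, z = Qc *ᵥ y := ⟨_, rfl⟩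
  have hJRz : (Jc - Rc) *ᵥ z = μ • y := by
    rw [hz_def, mulVec_mulVec, h2]
  -- q := star y ⬝ᵥ Q y  is real nonneg
  have hq0 : (0 : ℂ) ≤ star y ⬝ᵥ Qc *ᵥ y := hQ.dotProduct_mulVec_nonneg y
  have hq_im : (star y ⬝ᵥ Qc *ᵥ y).im = 0 := by
    rcases (Complex.le_def.mp hq0) with ⟨_, h⟩
    simpa using h.symm
  -- star z ⬝ᵥ y = q
  have hzy : star z ⬝ᵥ y = star y ⬝ᵥ Qc *ᵥ y := by
    rw [hz_def, star_mulVec, hQ.1, ← dotProduct_mulVec]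
  -- equation : j - r = μ * q
  have heq : star z ⬝ᵥ Jc *ᵥ z - star z ⬝ᵥ Rc *ᵥ z = μ * (star y ⬝ᵥ Qc *ᵥ y) := by
    have h : star z ⬝ᵥ ((Jc - Rc) *ᵥ z) = μ * (star y ⬝ᵥ Qc *ᵥ y) := by
      rw [hJRz, dotProduct_smul, hzy, smul_eq_mul]
    rw [← h, sub_mulVec, dotProduct_sub]
  -- j has zero real part
  have hj_re : (star z ⬝ᵥ Jc *ᵥ z).re = 0 := by
    have h1 := conj_quad Jc z
    rw [hJ, neg_mulVec, dotProduct_neg] at h1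
    have h2' : ((starRingEnd ℂ) (star z ⬝ᵥ Jc *ᵥ z)).re = (-(star z ⬝ᵥ Jc *ᵥ z)).re := by
      rw [h1]
    simp only [Complex.conj_re, Complex.neg_re] at h2'
    linarith
  -- r is real nonneg
  have hr0 : (0 : ℂ) ≤ star z ⬝ᵥ Rc *ᵥ z := hR.dotProduct_mulVec_nonneg z
  have hr_im : (star z ⬝ᵥ Rc *ᵥ z).im = 0 := by
    rcases (Complex.le_def.mp hr0) with ⟨_, h⟩
    simpa using h.symm
  -- take real parts : r = 0
  have hr : star z ⬝ᵥ Rc *ᵥ z = 0 := by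
    have hre : (star z ⬝ᵥ Jc *ᵥ z - star z ⬝ᵥ Rc *ᵥ z).re = (μ * (star y ⬝ᵥ Qc *ᵥ y)).re := by
      rw [heq]
    rw [Complex.sub_re, hj_re, Complex.mul_re, hμ, hq_im] at hre
    apply Complex.ext
    · simp only [Complex.zero_re]
      simpa using hre
    · simpa using hr_im
  have hRz : Rc *ᵥ z = 0 := (hR.dotProduct_mulVec_zero_iff z).mp hr
  -- hence J z = μ • y
  have hJz : Jc *ᵥ z = μ • y := by
    have h := hJRz
    rw [sub_mulVec, hRz, sub_zero] at h
    exact h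
  -- now compute star z ⬝ᵥ y via the definition of y, getting 0
  have hvecmul : star z ᵥ* ((Jc - Rc) * Qc) = μ • star z := by
    have hA : (Jc - Rc)ᴴ *ᵥ z = (-μ) • y := by
      rw [conjTranspose_sub, hJ, hR.1, sub_mulVec, neg_mulVec, hJz, hRz, sub_zero, neg_smul]
    have h1 : ((Jc - Rc) * Qc)ᴴ *ᵥ z = (-μ) • z := by
      rw [conjTranspose_mul, ← mulVec_mulVec, hA, mulVec_smul, hQ.1, ← hz_def]
    rw [star_vecMul', h1, star_smul, star_neg, neg_smul]
    rw [show (star μ : ℂ) = -μ from hμconj, neg_smul, neg_neg]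
  have hzy0 : star z ⬝ᵥ y = 0 := by
    rw [hy_def, sub_mulVec, Matrix.smul_mulVec, one_mulVec, dotProduct_sub,
      dotProduct_mulVec, hvecmul, smul_dotProduct, dotProduct_smul, sub_self]
  -- q = 0, so Q y = 0, so z = 0, so μ y = 0, so y = 0
  have hq : star y ⬝ᵥ Qc *ᵥ y = 0 := by rw [← hzy, hzy0]
  have hQy : Qc *ᵥ y = 0 := (hQ.dotProduct_mulVec_zero_iff y).mp hq
  have hz0 : z = 0 := by rw [hz_def, hQy]
  have hμy : μ • y = 0 := by
    rw [← h2, ← mulVec_mulVec, ← hz_def, hz0, mulVec_zero]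
  rcases smul_eq_zero.mp hμy with h | h
  · exact absurd h hμ0
  · exact h

theorem nonzero_imaginary_eigenvalues_semisimple {n : ℕ} (J R Q : Matrix (Fin n) (Fin n) ℝ)
    (hJ : Jᵀ = -J) (hR : R.PosSemidef) (hQ : Q.PosSemidef)
    (μ : ℂ) (hμ0 : μ ≠ 0) (hμ : μ.re = 0) :
    {x : Fin n → ℂ | ((toC ((J - R) * Q) - μ • 1) ^ n) *ᵥ x = 0} =
      {x : Fin n → ℂ | (toC ((J - R) * Q) - μ • 1) *ᵥ x = 0} := by
  have hMc : toC ((J - R) * Q) = (toC J - toC R) * toC Q := by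
    rw [toC_mul, toC_sub]
  have hJc : (toC J)ᴴ = -(toC J) := by
    rw [toC_conjTranspose, hJ]
    ext i j; simp [toC]
  have hRc := toC_posSemidef hR
  have hQc := toC_posSemidef hQ
  set N : Matrix (Fin n) (Fin n) ℂ := toC ((J - R) * Q) - μ • 1 with hN
  have key : ∀ x : Fin n → ℂ, N *ᵥ (N *ᵥ x) = 0 → N *ᵥ x = 0 := by
    intro x hx
    have h := key_step (toC J) (toC R) (toC Q) hJc hRc hQc μ hμ0 hμ x
    rw [← hMc] at h
    exact h hx
  rcases n with _ | m
  · ext x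
    constructor <;> intro _ <;> exact Subsingleton.elim _ _
  · have fwd : ∀ k : ℕ, ∀ x : Fin (m + 1) → ℂ, (N ^ (k + 1)) *ᵥ x = 0 → N *ᵥ x = 0 := by
      intro k
      induction k with
      | zero => intro x hx; rwa [pow_one] at hx
      | succ k ih =>
        intro x hx
        have h1 : (N ^ (k + 1)) *ᵥ (N *ᵥ x) = 0 := by
          rw [mulVec_mulVec, ← pow_succ]
          exact hx
        exact key x (ih _ h1)
    ext x
    simp only [Set.mem_setOf_eq]
    constructor
    · exact fwd m x
    · intro hx
      rw [pow_succ, ← mulVec_mulVec, hx, mulVec_zero]
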